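/- For u ∈ ℝ define f_u : ℝ → ℝ by f_u(x) := ∫_0^∞ e^{−e^x cosh w} cos(uw) dw, and for t > 0 and x, y ∈ ℝ define p(t; x, y) := ∫_0^∞ e^{−t u²} f_u(x) f_u(y) · (2/(π |Γ(iu)|²)) du, where Γ is the complex Gamma function. Then the integral defining p converges, p is differentiable in t and twice differentiable in x, and ∂_t p(t; x, y) = ∂_{xx} p(t; x, y) − e^{2x} p(t; x, y) for all t > 0 and x, y ∈ ℝ. -/

import Mathlib

open MeasureTheory
open Real Set

lemma self_le_exp (x : ℝ) : x ≤ Real.exp x := by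
  nlinarith [Real.add_one_le_exp x]

lemma pow_le_factorial_mul_exp (n : ℕ) {s : ℝ} (hs : 0 ≤ s) :
    s ^ n ≤ (n.factorial : ℝ) * Real.exp s := by
  have h := Real.sum_le_exp_of_nonneg hs (n + 1)
  have h2 : s ^ n / (n.factorial : ℝ) ≤ Real.exp s := by
    refine le_trans ?_ h
    apply Finset.single_le_sum (f := fun i => s ^ i / (i.factorial : ℝ))
      (fun i _ => by positivity) (Finset.self_mem_range_succ n)
  have hf : (0:ℝ) < n.factorial := by positivity
  calc s ^ n = (n.factorial : ℝ) * (s ^ n / n.factorial) := by field_simp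
  _ ≤ (n.factorial : ℝ) * Real.exp s := by
      exact mul_le_mul_of_nonneg_left h2 hf.le

lemma pow_mul_exp_neg_le (n : ℕ) {a s : ℝ} (ha : 0 < a) (hs : 0 ≤ s) :
    s ^ n * Real.exp (-(a * s)) ≤ ((n + 1) / a) ^ n * Real.exp (-(a * s) / (n + 1)) := by
  have hn1 : (0:ℝ) < n + 1 := by positivity
  have h1 : s ≤ (n + 1) / a * Real.exp (a * s / (n + 1)) := by
    have := self_le_exp (a * s / (n + 1))
    calc s = (n+1)/a * (a * s / (n+1)) := by field_simp
    _ ≤ (n+1)/a * Real.exp (a * s / (n+1)) := by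
        apply mul_le_mul_of_nonneg_left this (by positivity)
  have h2 : s ^ n ≤ ((n+1)/a * Real.exp (a * s / (n+1))) ^ n :=
    pow_le_pow_left₀ hs h1 n
  calc s ^ n * Real.exp (-(a*s)) ≤ ((n+1)/a * Real.exp (a*s/(n+1))) ^ n * Real.exp (-(a*s)) := by
        apply mul_le_mul_of_nonneg_right h2 (Real.exp_pos _).le
  _ = ((n+1)/a)^n * (Real.exp (a*s/(n+1)) ^ n * Real.exp (-(a*s))) := by
        rw [mul_pow]; ring
  _ = ((n+1)/a)^n * Real.exp (-(a*s)/(n+1)) := by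
        rw [← Real.exp_nat_mul, ← Real.exp_add]
        congr 2
        field_simp
        ring

lemma self_le_cosh {w : ℝ} (hw : 0 ≤ w) : w ≤ Real.cosh w := by
  have h1 : w ≤ Real.sinh w := Real.self_le_sinh_iff.2 hw
  have h2 : Real.sinh w ≤ Real.cosh w := by
    nlinarith [Real.cosh_sq w, Real.cosh_pos w, Real.sinh_sq w]
  linarith

lemma coshPow_exp_le (n : ℕ) {r : ℝ} (hr : 0 < r) {w : ℝ} (hw : 0 ≤ w) :
    Real.cosh w ^ n * Real.exp (-(r * Real.cosh w)) ≤
      ((n + 1) / r) ^ n * Real.exp (-(r / (n + 1)) * w) := by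
  have h := pow_mul_exp_neg_le n hr (le_trans zero_le_one (Real.one_le_cosh w))
  refine h.trans ?_
  apply mul_le_mul_of_nonneg_left _ (by positivity)
  apply Real.exp_le_exp.2
  have hn1 : (0:ℝ) < n + 1 := by positivity
  have hc := self_le_cosh hw
  have h3 : r * w ≤ r * Real.cosh w := mul_le_mul_of_nonneg_left hc hr.le
  rw [show -(r / (n + 1)) * w = -(r * w) / (n + 1) by ring]
  apply div_le_div_of_nonneg_right ?_ ?_ |>.trans_eq rfl
  · exact neg_le_neg h3
  · exact hn1.le

lemma integrableOn_coshPow_exp (n : ℕ) {r : ℝ} (hr : 0 < r) :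
    IntegrableOn (fun w => Real.cosh w ^ n * Real.exp (-(r * Real.cosh w))) (Set.Ioi 0) := by
  have hcont : Continuous fun w => Real.cosh w ^ n * Real.exp (-(r * Real.cosh w)) := by
    fun_prop
  refine Integrable.mono' (g := fun w => ((n + 1) / r) ^ n * Real.exp (-(r / (n + 1)) * w)) ?_
    hcont.aestronglyMeasurable ?_
  · exact ((exp_neg_integrableOn_Ioi 0 (by positivity)).const_mul _)
  · filter_upwards [self_mem_ae_restrict measurableSet_Ioi] with w hw
    rw [Real.norm_eq_abs, abs_of_nonneg (by positivity)]
    exact coshPow_exp_le n hr (le_of_lt hw)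

/-- `f_u(x) = K_{iu}(e^x) = ∫_0^∞ e^{-e^x cosh w} cos(uw) dw`. -/
noncomputable def besselF (u x : ℝ) : ℝ :=
  ∫ w in Set.Ioi (0 : ℝ), Real.exp (-Real.exp x * Real.cosh w) * Real.cos (u * w)

/-- The spectral heat-kernel integrand
`u ↦ e^{-t u²} f_u(x) f_u(y) · 2/(π |Γ(iu)|²)`. -/
noncomputable def heatKerIntegrand (t x y u : ℝ) : ℝ :=
  Real.exp (-t * u ^ 2) * besselF u x * besselF u y *
    (2 / (Real.pi * ‖Complex.Gamma ((u : ℂ) * Complex.I)‖ ^ 2))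

/-- The heat kernel `p(t;x,y) = ∫_0^∞ e^{-t u²} f_u(x) f_u(y) · 2/(π |Γ(iu)|²) du`
for the operator `ℒf = f'' - e^{2x} f`. -/
noncomputable def heatKer (t x y : ℝ) : ℝ :=
  ∫ u in Set.Ioi (0 : ℝ), heatKerIntegrand t x y u

/-- auxiliary integral `∫_0^∞ cosh^n w e^{-r cosh w} dw` -/
noncomputable def bK (r : ℝ) (n : ℕ) : ℝ :=
  ∫ w in Set.Ioi (0:ℝ), Real.cosh w ^ n * Real.exp (-(r * Real.cosh w))

noncomputable def besselF1 (u x : ℝ) : ℝ :=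
  ∫ w in Set.Ioi (0 : ℝ),
    Real.exp (-Real.exp x * Real.cosh w) * (-Real.exp x * Real.cosh w) * Real.cos (u * w)

noncomputable def besselF2 (u x : ℝ) : ℝ :=
  ∫ w in Set.Ioi (0 : ℝ),
    Real.exp (-Real.exp x * Real.cosh w) *
      ((-Real.exp x * Real.cosh w) ^ 2 + -Real.exp x * Real.cosh w) * Real.cos (u * w)

lemma bK_nonneg (r : ℝ) (n : ℕ) : 0 ≤ bK r n := by
  apply integral_nonneg
  intro w
  positivity

lemma intF0 (u x : ℝ) :
    IntegrableOn (fun w => Real.exp (-Real.exp x * Real.cosh w) * Real.cos (u * w))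
      (Set.Ioi 0) := by
  refine Integrable.mono' (integrableOn_coshPow_exp 0 (Real.exp_pos x)) (Continuous.aestronglyMeasurable (by fun_prop)) ?_
  filter_upwards with w
  rw [Real.norm_eq_abs, abs_mul, Real.abs_exp, pow_zero, one_mul]
  calc Real.exp (-Real.exp x * Real.cosh w) * |Real.cos (u*w)|
      ≤ Real.exp (-Real.exp x * Real.cosh w) * 1 := by
        apply mul_le_mul_of_nonneg_left (Real.abs_cos_le_one _) (Real.exp_pos _).le
  _ = Real.exp (-(Real.exp x * Real.cosh w)) := by rw [mul_one, neg_mul]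

lemma besselF_abs_le (u x : ℝ) : |besselF u x| ≤ bK (Real.exp x) 0 := by
  rw [besselF, bK, ← Real.norm_eq_abs]
  apply norm_integral_le_of_norm_le (integrableOn_coshPow_exp 0 (Real.exp_pos x))
  filter_upwards with w
  rw [Real.norm_eq_abs, abs_mul, Real.abs_exp, pow_zero, one_mul]
  calc Real.exp (-Real.exp x * Real.cosh w) * |Real.cos (u*w)|
      ≤ Real.exp (-Real.exp x * Real.cosh w) * 1 := by
        apply mul_le_mul_of_nonneg_left (Real.abs_cos_le_one _) (Real.exp_pos _).le
  _ = Real.exp (-(Real.exp x * Real.cosh w)) := by rw [mul_one, neg_mul]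

lemma exp_exp_le {x x' w : ℝ} (h : |x' - x| ≤ 1) :
    Real.exp (-Real.exp x' * Real.cosh w) ≤ Real.exp (-(Real.exp (x-1) * Real.cosh w)) := by
  apply Real.exp_le_exp.2
  rw [neg_mul]
  apply neg_le_neg
  apply mul_le_mul_of_nonneg_right _ (Real.cosh_pos w).le
  apply Real.exp_le_exp.2
  rw [abs_le] at h; linarith

lemma exp_le_exp_add {x x' : ℝ} (h : |x' - x| ≤ 1) : Real.exp x' ≤ Real.exp (x+1) := by
  apply Real.exp_le_exp.2; rw [abs_le] at h; linarith

lemma key_bound1 {x x' : ℝ} (w : ℝ) (h : |x' - x| ≤ 1) :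
    Real.exp (-Real.exp x' * Real.cosh w) * (Real.exp x' * Real.cosh w) ≤
      Real.exp (x+1) * (Real.cosh w ^ 1 * Real.exp (-(Real.exp (x-1) * Real.cosh w))) := by
  have h1 := exp_exp_le (w := w) h
  have h2 := exp_le_exp_add h
  have hc := (Real.cosh_pos w).le
  calc Real.exp (-Real.exp x' * Real.cosh w) * (Real.exp x' * Real.cosh w)
      ≤ Real.exp (-(Real.exp (x-1) * Real.cosh w)) * (Real.exp (x+1) * Real.cosh w) := by
        apply mul_le_mul h1 (mul_le_mul_of_nonneg_right h2 hc) (by positivity) (Real.exp_pos _).le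
  _ = Real.exp (x+1) * (Real.cosh w ^ 1 * Real.exp (-(Real.exp (x-1) * Real.cosh w))) := by ring

lemma key_bound2 {x x' : ℝ} (w : ℝ) (h : |x' - x| ≤ 1) :
    Real.exp (-Real.exp x' * Real.cosh w) * (Real.exp x' * Real.cosh w)^2 ≤
      Real.exp (x+1)^2 * (Real.cosh w ^ 2 * Real.exp (-(Real.exp (x-1) * Real.cosh w))) := by
  have h1 := exp_exp_le (w := w) h
  have h2 := exp_le_exp_add h
  have hc := (Real.cosh_pos w).le
  have h3 : (Real.exp x' * Real.cosh w)^2 ≤ (Real.exp (x+1) * Real.cosh w)^2 := by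
    apply pow_le_pow_left₀ (by positivity) (mul_le_mul_of_nonneg_right h2 hc)
  calc Real.exp (-Real.exp x' * Real.cosh w) * (Real.exp x' * Real.cosh w)^2
      ≤ Real.exp (-(Real.exp (x-1) * Real.cosh w)) * (Real.exp (x+1) * Real.cosh w)^2 := by
        apply mul_le_mul h1 h3 (by positivity) (Real.exp_pos _).le
  _ = Real.exp (x+1)^2 * (Real.cosh w ^ 2 * Real.exp (-(Real.exp (x-1) * Real.cosh w))) := by ring

lemma norm_F1_le (u : ℝ) {x x' : ℝ} (w : ℝ) (h : |x' - x| ≤ 1) :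
    ‖Real.exp (-Real.exp x' * Real.cosh w) * (-Real.exp x' * Real.cosh w) * Real.cos (u * w)‖ ≤
      Real.exp (x+1) * (Real.cosh w ^ 1 * Real.exp (-(Real.exp (x-1) * Real.cosh w))) := by
  have e2 : |-Real.exp x' * Real.cosh w| = Real.exp x' * Real.cosh w := by
    rw [abs_mul, abs_neg, Real.abs_exp, abs_of_nonneg (Real.cosh_pos w).le]
  rw [Real.norm_eq_abs, abs_mul, abs_mul, Real.abs_exp, e2]
  refine le_trans ?_ (key_bound1 w h)
  calc Real.exp (-Real.exp x' * Real.cosh w) * (Real.exp x' * Real.cosh w) * |Real.cos (u*w)|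
      ≤ Real.exp (-Real.exp x' * Real.cosh w) * (Real.exp x' * Real.cosh w) * 1 := by
        apply mul_le_mul_of_nonneg_left (Real.abs_cos_le_one _) (by positivity)
  _ = _ := mul_one _

lemma norm_F2_le (u : ℝ) {x x' : ℝ} (w : ℝ) (h : |x' - x| ≤ 1) :
    ‖Real.exp (-Real.exp x' * Real.cosh w) *
        ((-Real.exp x' * Real.cosh w) ^ 2 + -Real.exp x' * Real.cosh w) * Real.cos (u * w)‖ ≤
      Real.exp (x+1)^2 * (Real.cosh w ^ 2 * Real.exp (-(Real.exp (x-1) * Real.cosh w))) +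
        Real.exp (x+1) * (Real.cosh w ^ 1 * Real.exp (-(Real.exp (x-1) * Real.cosh w))) := by
  have h1 := key_bound1 (x := x) (x' := x') w h
  have h2 := key_bound2 (x := x) (x' := x') w h
  rw [Real.norm_eq_abs, abs_mul, abs_mul, Real.abs_exp]
  have hcos := Real.abs_cos_le_one (u * w)
  have habs : |(-Real.exp x' * Real.cosh w) ^ 2 + -Real.exp x' * Real.cosh w| ≤
      (Real.exp x' * Real.cosh w)^2 + Real.exp x' * Real.cosh w := by
    have e1 : (-Real.exp x' * Real.cosh w)^2 = (Real.exp x' * Real.cosh w)^2 := by ring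
    refine (abs_add_le _ _).trans ?_
    have e2 : |-Real.exp x' * Real.cosh w| = Real.exp x' * Real.cosh w := by
      rw [abs_mul, abs_neg, Real.abs_exp, abs_of_nonneg (Real.cosh_pos w).le]
    rw [e1, abs_of_nonneg (by positivity : (0:ℝ) ≤ (Real.exp x' * Real.cosh w)^2), e2]
  have hexp := (Real.exp_pos (-Real.exp x' * Real.cosh w)).le
  calc Real.exp (-Real.exp x' * Real.cosh w) *
        |(-Real.exp x' * Real.cosh w) ^ 2 + -Real.exp x' * Real.cosh w| * |Real.cos (u*w)|
      ≤ Real.exp (-Real.exp x' * Real.cosh w) *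
        ((Real.exp x' * Real.cosh w)^2 + Real.exp x' * Real.cosh w) * 1 := by
        apply mul_le_mul (mul_le_mul_of_nonneg_left habs hexp) hcos (abs_nonneg _) (by positivity)
  _ = Real.exp (-Real.exp x' * Real.cosh w) * (Real.exp x' * Real.cosh w)^2 +
        Real.exp (-Real.exp x' * Real.cosh w) * (Real.exp x' * Real.cosh w) := by ring
  _ ≤ _ := add_le_add h2 h1

lemma bound1_int (x : ℝ) : IntegrableOn
    (fun w => Real.exp (x+1) * (Real.cosh w ^ 1 * Real.exp (-(Real.exp (x-1) * Real.cosh w))))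
    (Set.Ioi 0) :=
  (integrableOn_coshPow_exp 1 (Real.exp_pos (x-1))).const_mul _

lemma bound2_int (x : ℝ) : IntegrableOn
    (fun w => Real.exp (x+1)^2 * (Real.cosh w ^ 2 * Real.exp (-(Real.exp (x-1) * Real.cosh w))) +
      Real.exp (x+1) * (Real.cosh w ^ 1 * Real.exp (-(Real.exp (x-1) * Real.cosh w))))
    (Set.Ioi 0) :=
  ((integrableOn_coshPow_exp 2 (Real.exp_pos (x-1))).const_mul _).add (bound1_int x)

lemma inner_hasDerivAt (u w x' : ℝ) :
    HasDerivAt (fun z => Real.exp (-Real.exp z * Real.cosh w) * Real.cos (u * w))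
      (Real.exp (-Real.exp x' * Real.cosh w) * (-Real.exp x' * Real.cosh w) * Real.cos (u * w))
      x' := by
  have hg : HasDerivAt (fun z => -Real.exp z * Real.cosh w) (-Real.exp x' * Real.cosh w) x' :=
    (Real.hasDerivAt_exp x').neg.mul_const _
  have he := (Real.hasDerivAt_exp (-Real.exp x' * Real.cosh w)).comp x' hg
  exact he.mul_const _

lemma inner1_hasDerivAt (u w x' : ℝ) :
    HasDerivAt (fun z => Real.exp (-Real.exp z * Real.cosh w) * (-Real.exp z * Real.cosh w) *
        Real.cos (u * w))
      (Real.exp (-Real.exp x' * Real.cosh w) *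
        ((-Real.exp x' * Real.cosh w) ^ 2 + -Real.exp x' * Real.cosh w) * Real.cos (u * w))
      x' := by
  have hg : HasDerivAt (fun z => -Real.exp z * Real.cosh w) (-Real.exp x' * Real.cosh w) x' :=
    (Real.hasDerivAt_exp x').neg.mul_const _
  have he := (Real.hasDerivAt_exp (-Real.exp x' * Real.cosh w)).comp x' hg
  have := (he.mul hg).mul_const (Real.cos (u * w))
  exact this.congr_deriv (by simp only [Function.comp_apply, Pi.mul_apply]; ring)

lemma besselF_hasDerivAt (u x : ℝ) : HasDerivAt (fun x' => besselF u x') (besselF1 u x) x := by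
  have := hasDerivAt_integral_of_dominated_loc_of_deriv_le (μ := volume.restrict (Set.Ioi 0))
    (F := fun x' w => Real.exp (-Real.exp x' * Real.cosh w) * Real.cos (u * w))
    (F' := fun x' w => Real.exp (-Real.exp x' * Real.cosh w) * (-Real.exp x' * Real.cosh w) *
      Real.cos (u * w))
    (x₀ := x)
    (bound := fun w => Real.exp (x+1) *
      (Real.cosh w ^ 1 * Real.exp (-(Real.exp (x-1) * Real.cosh w))))
    (Metric.ball_mem_nhds x one_pos)
    (Filter.Eventually.of_forall fun x' => (Continuous.aestronglyMeasurable (by fun_prop)))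
    (intF0 u x)
    (Continuous.aestronglyMeasurable (by fun_prop))
    (Filter.Eventually.of_forall fun w => fun x' hx' =>
      norm_F1_le u w (by rw [Metric.mem_ball, Real.dist_eq] at hx'; exact hx'.le))
    (bound1_int x)
    (Filter.Eventually.of_forall fun w => fun x' _ => inner_hasDerivAt u w x')
  exact this.2

lemma besselF1_hasDerivAt (u x : ℝ) : HasDerivAt (fun x' => besselF1 u x') (besselF2 u x) x := by
  have h0 : IntegrableOn (fun w => Real.exp (-Real.exp x * Real.cosh w) *
      (-Real.exp x * Real.cosh w) * Real.cos (u * w)) (Set.Ioi 0) := by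
    refine Integrable.mono' (bound1_int x) (Continuous.aestronglyMeasurable (by fun_prop)) ?_
    filter_upwards with w
    exact norm_F1_le u w (by simp)
  have := hasDerivAt_integral_of_dominated_loc_of_deriv_le (μ := volume.restrict (Set.Ioi 0))
    (F := fun x' w => Real.exp (-Real.exp x' * Real.cosh w) * (-Real.exp x' * Real.cosh w) *
      Real.cos (u * w))
    (F' := fun x' w => Real.exp (-Real.exp x' * Real.cosh w) *
      ((-Real.exp x' * Real.cosh w) ^ 2 + -Real.exp x' * Real.cosh w) * Real.cos (u * w))
    (x₀ := x)
    (bound := fun w => Real.exp (x+1)^2 *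
      (Real.cosh w ^ 2 * Real.exp (-(Real.exp (x-1) * Real.cosh w))) +
      Real.exp (x+1) * (Real.cosh w ^ 1 * Real.exp (-(Real.exp (x-1) * Real.cosh w))))
    (Metric.ball_mem_nhds x one_pos)
    (Filter.Eventually.of_forall fun x' => (Continuous.aestronglyMeasurable (by fun_prop)))
    h0
    (Continuous.aestronglyMeasurable (by fun_prop))
    (Filter.Eventually.of_forall fun w => fun x' hx' =>
      norm_F2_le u w (by rw [Metric.mem_ball, Real.dist_eq] at hx'; exact hx'.le))
    (bound2_int x)
    (Filter.Eventually.of_forall fun w => fun x' _ => inner1_hasDerivAt u w x')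
  exact this.2

lemma besselF1_abs_le {u x x' : ℝ} (h : |x' - x| ≤ 1) :
    |besselF1 u x'| ≤ Real.exp (x+1) * bK (Real.exp (x-1)) 1 := by
  rw [besselF1, ← Real.norm_eq_abs, bK, ← integral_const_mul]
  apply norm_integral_le_of_norm_le ((integrableOn_coshPow_exp 1 (Real.exp_pos (x-1))).const_mul _)
  filter_upwards with w
  exact norm_F1_le u w h

lemma besselF2_abs_le {u x x' : ℝ} (h : |x' - x| ≤ 1) :
    |besselF2 u x'| ≤ Real.exp (x+1)^2 * bK (Real.exp (x-1)) 2 +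
      Real.exp (x+1) * bK (Real.exp (x-1)) 1 := by
  have hint : IntegrableOn (fun w =>
      Real.exp (x+1)^2 * (Real.cosh w ^ 2 * Real.exp (-(Real.exp (x-1) * Real.cosh w))) +
      Real.exp (x+1) * (Real.cosh w ^ 1 * Real.exp (-(Real.exp (x-1) * Real.cosh w))))
      (Set.Ioi 0) := bound2_int x
  rw [besselF2, ← Real.norm_eq_abs, bK, bK]
  rw [show Real.exp (x+1)^2 * (∫ w in Set.Ioi (0:ℝ), Real.cosh w ^ 2 *
      Real.exp (-(Real.exp (x-1) * Real.cosh w))) +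
      Real.exp (x+1) * (∫ w in Set.Ioi (0:ℝ), Real.cosh w ^ 1 *
      Real.exp (-(Real.exp (x-1) * Real.cosh w))) =
      ∫ w in Set.Ioi (0:ℝ),
        (Real.exp (x+1)^2 * (Real.cosh w ^ 2 * Real.exp (-(Real.exp (x-1) * Real.cosh w))) +
         Real.exp (x+1) * (Real.cosh w ^ 1 * Real.exp (-(Real.exp (x-1) * Real.cosh w)))) from by
    rw [integral_add (((integrableOn_coshPow_exp 2 (Real.exp_pos (x-1))).const_mul _))
      ((integrableOn_coshPow_exp 1 (Real.exp_pos (x-1))).const_mul _),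
      integral_const_mul, integral_const_mul]]
  apply norm_integral_le_of_norm_le hint
  filter_upwards with w
  exact norm_F2_le u w h

lemma besselF_abs_le' {u x x' : ℝ} (h : |x' - x| ≤ 1) :
    |besselF u x'| ≤ bK (Real.exp (x-1)) 0 := by
  refine (besselF_abs_le u x').trans ?_
  rw [bK, bK]
  apply setIntegral_mono_on (integrableOn_coshPow_exp 0 (Real.exp_pos x'))
    (integrableOn_coshPow_exp 0 (Real.exp_pos (x-1))) measurableSet_Ioi
  intro w _
  simp only [pow_zero, one_mul]
  apply Real.exp_le_exp.2
  apply neg_le_neg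
  apply mul_le_mul_of_nonneg_right _ (Real.cosh_pos w).le
  apply Real.exp_le_exp.2
  rw [abs_le] at h; linarith

set_option maxHeartbeats 1000000 in
lemma intG2 (u x : ℝ) : IntegrableOn (fun w =>
    (Real.exp x^2 * Real.sinh w^2 - Real.exp x * Real.cosh w) *
      Real.exp (-Real.exp x * Real.cosh w) * Real.cos (u*w)) (Set.Ioi 0) := by
  have hgint : IntegrableOn (fun w =>
      Real.exp x^2 * (Real.cosh w ^ 2 * Real.exp (-(Real.exp x * Real.cosh w))) +
      Real.exp x * (Real.cosh w ^ 1 * Real.exp (-(Real.exp x * Real.cosh w)))) (Set.Ioi 0) :=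
    ((integrableOn_coshPow_exp 2 (Real.exp_pos x)).const_mul _).add
      ((integrableOn_coshPow_exp 1 (Real.exp_pos x)).const_mul _)
  refine Integrable.mono' hgint (Continuous.aestronglyMeasurable (by fun_prop)) ?_
  filter_upwards with w
  rw [Real.norm_eq_abs, abs_mul, abs_mul, Real.abs_exp]
  have h1 : |Real.exp x^2 * Real.sinh w^2 - Real.exp x * Real.cosh w| ≤
      Real.exp x^2 * Real.cosh w^2 + Real.exp x * Real.cosh w := by
    have hs : Real.sinh w ^ 2 ≤ Real.cosh w ^ 2 := by nlinarith [Real.cosh_sq w, Real.sinh_sq w]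
    rw [abs_sub_comm, abs_sub_le_iff]
    constructor
    · nlinarith [Real.cosh_pos w, Real.exp_pos x, sq_nonneg (Real.sinh w), sq_nonneg (Real.exp x)]
    · nlinarith [Real.cosh_pos w, Real.exp_pos x, sq_nonneg (Real.exp x), sq_nonneg (Real.sinh w)]
  have hcos := Real.abs_cos_le_one (u*w)
  have hB := (Real.exp_pos (-Real.exp x * Real.cosh w)).le
  calc |Real.exp x^2 * Real.sinh w^2 - Real.exp x * Real.cosh w| *
        Real.exp (-Real.exp x * Real.cosh w) * |Real.cos (u*w)|
      ≤ (Real.exp x^2 * Real.cosh w^2 + Real.exp x * Real.cosh w) *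
        Real.exp (-Real.exp x * Real.cosh w) * 1 := by
        apply mul_le_mul (mul_le_mul_of_nonneg_right h1 hB) hcos (abs_nonneg _) (by positivity)
  _ = _ := by rw [mul_one, neg_mul]; ring

lemma besselF2_eq (u x : ℝ) : besselF2 u x = (Real.exp x ^ 2 - u^2) * besselF u x := by
  have hrpos : 0 < Real.exp x := Real.exp_pos x
  set H : ℝ → ℝ := fun w => -Real.exp x * Real.sinh w * Real.exp (-Real.exp x * Real.cosh w) *
      Real.cos (u*w) + u * (Real.exp (-Real.exp x * Real.cosh w) * Real.sin (u*w)) with hH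
  set H' : ℝ → ℝ := fun w =>
    (Real.exp x^2 * Real.sinh w^2 - Real.exp x * Real.cosh w) *
      Real.exp (-Real.exp x * Real.cosh w) * Real.cos (u*w) +
    u^2 * (Real.exp (-Real.exp x * Real.cosh w) * Real.cos (u*w)) with hH'
  have hderiv : ∀ w ∈ Set.Ioi (0:ℝ), HasDerivAt H (H' w) w := by
    intro w _
    have hinner : HasDerivAt (fun w => -Real.exp x * Real.cosh w)
        (-Real.exp x * Real.sinh w) w := by
      simpa using (Real.hasDerivAt_cosh w).const_mul (-Real.exp x)
    have hB : HasDerivAt (fun w => Real.exp (-Real.exp x * Real.cosh w))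
        (Real.exp (-Real.exp x * Real.cosh w) * (-Real.exp x * Real.sinh w)) w :=
      (Real.hasDerivAt_exp _).comp w hinner
    have hA : HasDerivAt (fun w => -Real.exp x * Real.sinh w) (-Real.exp x * Real.cosh w) w := by
      simpa using (Real.hasDerivAt_sinh w).const_mul (-Real.exp x)
    have hid : HasDerivAt (fun w : ℝ => u * w) u w := by
      simpa using (hasDerivAt_id w).const_mul u
    have hcosu : HasDerivAt (fun w => Real.cos (u*w)) (-Real.sin (u*w) * u) w :=
      (Real.hasDerivAt_cos (u*w)).comp w hid
    have hsinu : HasDerivAt (fun w => Real.sin (u*w)) (Real.cos (u*w) * u) w :=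
      (Real.hasDerivAt_sin (u*w)).comp w hid
    have h1 := (hA.mul hB).mul hcosu
    have h2 := (hB.mul hsinu).const_mul u
    have h3 := h1.add h2
    exact h3.congr_deriv (by simp only [hH', Pi.mul_apply]; ring)
  have hcont : ContinuousWithinAt H (Set.Ici 0) 0 :=
    (Continuous.continuousWithinAt (by fun_prop))
  have hH'int : IntegrableOn H' (Set.Ioi 0) :=
    (intG2 u x).add ((intF0 u x).const_mul _)
  have hgtend : Filter.Tendsto (fun w => (2 + |u|) * Real.exp (-(Real.exp x/2) * w))
      Filter.atTop (nhds 0) := by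
    rw [show (0:ℝ) = (2 + |u|) * 0 from (mul_zero _).symm]
    apply Filter.Tendsto.const_mul
    apply Real.tendsto_exp_atBot.comp
    apply Filter.Tendsto.const_mul_atTop_of_neg (by linarith : -(Real.exp x/2) < 0)
      Filter.tendsto_id
  have hbound : ∀ᶠ w in Filter.atTop, ‖H w‖ ≤ (2 + |u|) * Real.exp (-(Real.exp x/2) * w) := by
    filter_upwards [Filter.eventually_ge_atTop (0:ℝ)] with w hw
    have hb1 : Real.cosh w * Real.exp (-(Real.exp x * Real.cosh w)) ≤
        (2/Real.exp x) * Real.exp (-(Real.exp x/2) * w) := by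
      have h := coshPow_exp_le 1 hrpos hw
      rw [pow_one] at h
      refine h.trans (le_of_eq ?_)
      norm_num
    have hb0 : Real.exp (-(Real.exp x * Real.cosh w)) ≤ Real.exp (-(Real.exp x/2) * w) := by
      apply Real.exp_le_exp.2
      have := self_le_cosh hw
      nlinarith
    have hsinh : |Real.sinh w| ≤ Real.cosh w := by
      rw [Real.abs_sinh, ← Real.cosh_abs w]
      nlinarith [Real.cosh_sq |w|, Real.sinh_nonneg_iff.2 (abs_nonneg w), Real.cosh_pos |w|]
    have key : ‖H w‖ ≤ Real.exp x * (Real.cosh w * Real.exp (-(Real.exp x * Real.cosh w))) +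
        |u| * Real.exp (-(Real.exp x * Real.cosh w)) := by
      rw [hH]
      refine (norm_add_le _ _).trans ?_
      rw [Real.norm_eq_abs, Real.norm_eq_abs, abs_mul, abs_mul, abs_mul, abs_mul, abs_mul,
        abs_neg, abs_of_nonneg hrpos.le, Real.abs_exp]
      have e : -Real.exp x * Real.cosh w = -(Real.exp x * Real.cosh w) := by ring
      rw [e]
      refine add_le_add ?_ ?_
      · calc Real.exp x * |Real.sinh w| * Real.exp (-(Real.exp x * Real.cosh w)) *
              |Real.cos (u*w)|
            ≤ Real.exp x * Real.cosh w * Real.exp (-(Real.exp x * Real.cosh w)) * 1 := by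
              apply mul_le_mul _ (Real.abs_cos_le_one _) (abs_nonneg _) (by positivity)
              apply mul_le_mul_of_nonneg_right _ (Real.exp_pos _).le
              exact mul_le_mul_of_nonneg_left hsinh hrpos.le
        _ = Real.exp x * (Real.cosh w * Real.exp (-(Real.exp x * Real.cosh w))) := by ring
      · calc |u| * (Real.exp (-(Real.exp x * Real.cosh w)) * |Real.sin (u*w)|)
            ≤ |u| * (Real.exp (-(Real.exp x * Real.cosh w)) * 1) := by
              apply mul_le_mul_of_nonneg_left _ (abs_nonneg u)
              exact mul_le_mul_of_nonneg_left (Real.abs_sin_le_one _) (Real.exp_pos _).le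
        _ = |u| * Real.exp (-(Real.exp x * Real.cosh w)) := by ring
    refine key.trans ?_
    have c1 : Real.exp x * (Real.cosh w * Real.exp (-(Real.exp x * Real.cosh w))) ≤
        2 * Real.exp (-(Real.exp x/2) * w) := by
      have := mul_le_mul_of_nonneg_left hb1 hrpos.le
      refine this.trans (le_of_eq ?_)
      field_simp
    have c2 : |u| * Real.exp (-(Real.exp x * Real.cosh w)) ≤
        |u| * Real.exp (-(Real.exp x/2) * w) :=
      mul_le_mul_of_nonneg_left hb0 (abs_nonneg u)
    calc _ ≤ 2 * Real.exp (-(Real.exp x/2) * w) + |u| * Real.exp (-(Real.exp x/2) * w) :=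
          add_le_add c1 c2
    _ = (2 + |u|) * Real.exp (-(Real.exp x/2) * w) := by ring
  have htend : Filter.Tendsto H Filter.atTop (nhds 0) := squeeze_zero_norm' hbound hgtend
  have hfund := integral_Ioi_of_hasDerivAt_of_tendsto hcont hderiv hH'int htend
  have hH0 : H 0 = 0 := by simp [hH]
  rw [hH0, sub_zero] at hfund
  have hsplit : ∫ w in Set.Ioi (0:ℝ), H' w =
      (∫ w in Set.Ioi (0:ℝ), (Real.exp x^2 * Real.sinh w^2 - Real.exp x * Real.cosh w) *
        Real.exp (-Real.exp x * Real.cosh w) * Real.cos (u*w)) + u^2 * besselF u x := by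
    rw [hH', integral_add (intG2 u x) ((intF0 u x).const_mul _), integral_const_mul]
    rfl
  rw [hsplit] at hfund
  have hsplit2 : besselF2 u x =
      (∫ w in Set.Ioi (0:ℝ), (Real.exp x^2 * Real.sinh w^2 - Real.exp x * Real.cosh w) *
        Real.exp (-Real.exp x * Real.cosh w) * Real.cos (u*w)) +
        Real.exp x^2 * besselF u x := by
    have hadd := integral_add (μ := volume.restrict (Set.Ioi 0)) (intG2 u x)
      ((intF0 u x).const_mul (Real.exp x ^ 2))
    rw [integral_const_mul] at hadd
    rw [besselF2, show besselF u x = ∫ w in Set.Ioi (0:ℝ),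
      Real.exp (-Real.exp x * Real.cosh w) * Real.cos (u * w) from rfl, ← hadd]
    apply setIntegral_congr_fun measurableSet_Ioi
    intro w _
    simp only
    linear_combination (-(Real.exp x ^ 2) * Real.exp (-Real.exp x * Real.cosh w) *
      Real.cos (u*w)) * (Real.sinh_sq w)
  rw [hsplit2]
  have : (∫ w in Set.Ioi (0:ℝ), (Real.exp x^2 * Real.sinh w^2 - Real.exp x * Real.cosh w) *
      Real.exp (-Real.exp x * Real.cosh w) * Real.cos (u*w)) = - (u^2 * besselF u x) := by
    linarith
  rw [this]
  ring

lemma gamma_abs_sq {u : ℝ} (hu : 0 < u) :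
    ‖Complex.Gamma ((u : ℂ) * Complex.I)‖ ^ 2 =
      Real.pi / (u * Real.sinh (Real.pi * u)) := by
  have hune : (u:ℂ) ≠ 0 := Complex.ofReal_ne_zero.2 hu.ne'
  have hz : (u:ℂ) * Complex.I ≠ 0 := mul_ne_zero hune Complex.I_ne_zero
  have hS : Real.sinh (Real.pi * u) ≠ 0 :=
    ne_of_gt (Real.sinh_pos_iff.2 (by positivity))
  have h1 := Complex.Gamma_mul_Gamma_one_sub ((u:ℂ) * Complex.I)
  have h2 : Complex.Gamma (1 - (u:ℂ) * Complex.I) =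
      -((u:ℂ) * Complex.I) * Complex.Gamma (-((u:ℂ) * Complex.I)) := by
    rw [show (1 : ℂ) - (u:ℂ) * Complex.I = -((u:ℂ) * Complex.I) + 1 by ring,
      Complex.Gamma_add_one _ (neg_ne_zero.2 hz)]
  have h3 : Complex.Gamma (-((u:ℂ) * Complex.I)) =
      starRingEnd ℂ (Complex.Gamma ((u:ℂ) * Complex.I)) := by
    rw [← Complex.Gamma_conj]
    congr 1
    simp [Complex.conj_I]
  have h4 : Complex.sin (Real.pi * ((u:ℂ) * Complex.I)) =
      (Real.sinh (Real.pi * u) : ℂ) * Complex.I := by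
    rw [show (Real.pi : ℂ) * ((u:ℂ) * Complex.I) = ((Real.pi * u : ℝ) : ℂ) * Complex.I by
      push_cast; ring, Complex.sin_mul_I, Complex.ofReal_sinh]
  rw [h2, h3, h4] at h1
  have h5 : Complex.Gamma ((u:ℂ) * Complex.I) *
      (-((u:ℂ) * Complex.I) * starRingEnd ℂ (Complex.Gamma ((u:ℂ) * Complex.I))) =
      -((u:ℂ) * Complex.I) * (Complex.normSq (Complex.Gamma ((u:ℂ) * Complex.I)) : ℂ) := by
    rw [← Complex.mul_conj]
    ring
  rw [h5] at h1
  have hSI : (Real.sinh (Real.pi * u) : ℂ) * Complex.I ≠ 0 :=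
    mul_ne_zero (Complex.ofReal_ne_zero.2 hS) Complex.I_ne_zero
  rw [eq_div_iff hSI] at h1
  have key : ((u * Real.sinh (Real.pi * u) *
      Complex.normSq (Complex.Gamma ((u:ℂ) * Complex.I)) : ℝ) : ℂ) = ((Real.pi : ℝ) : ℂ) := by
    push_cast at h1 ⊢
    linear_combination h1 + ((u:ℂ) * (Complex.normSq (Complex.Gamma ((u:ℂ) * Complex.I)) : ℂ) *
      Complex.sinh ((Real.pi : ℂ) * (u:ℂ))) * Complex.I_sq
  have keyR : u * Real.sinh (Real.pi * u) *
      Complex.normSq (Complex.Gamma ((u:ℂ) * Complex.I)) = Real.pi :=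
    Complex.ofReal_inj.1 key
  rw [Complex.sq_norm]
  field_simp
  linarith [keyR]

noncomputable def cker (u : ℝ) : ℝ := 2 * (u * Real.sinh (Real.pi * u)) / Real.pi ^ 2

lemma sinh_le_exp {s : ℝ} (h : 0 ≤ s) : Real.sinh s ≤ Real.exp s := by
  rw [Real.sinh_eq]
  nlinarith [Real.exp_pos (-s), Real.exp_pos s]

lemma cker_nonneg {u : ℝ} (hu : 0 ≤ u) : 0 ≤ cker u := by
  have : 0 ≤ Real.sinh (Real.pi * u) := Real.sinh_nonneg_iff.2 (by positivity)
  rw [cker]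
  positivity

lemma cker_abs_le {u : ℝ} (hu : 0 ≤ u) :
    |cker u| ≤ 2 / Real.pi ^ 2 * (u * Real.exp (Real.pi * u)) := by
  rw [abs_of_nonneg (cker_nonneg hu), cker]
  rw [div_le_iff₀ (by positivity : (0:ℝ) < Real.pi ^ 2)]
  have h := sinh_le_exp (by positivity : (0:ℝ) ≤ Real.pi * u)
  have := Real.pi_pos
  calc 2 * (u * Real.sinh (Real.pi * u)) ≤ 2 * (u * Real.exp (Real.pi * u)) := by
        apply mul_le_mul_of_nonneg_left (mul_le_mul_of_nonneg_left h hu) (by norm_num)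
  _ = 2 / Real.pi ^ 2 * (u * Real.exp (Real.pi * u)) * Real.pi ^ 2 := by
        field_simp

lemma integrableOn_M {t : ℝ} (ht : 0 < t) (n : ℕ) :
    IntegrableOn (fun u => u ^ n * Real.exp (Real.pi * u) * Real.exp (-t * u ^ 2))
      (Set.Ioi 0) := by
  have ht2 : (0:ℝ) < t/2 := by linarith
  have ht4 : (0:ℝ) < t/4 := by linarith
  have gint : Integrable (fun u : ℝ => Real.exp (Real.pi^2/(2*t)) * Real.exp (-(t/2) * u^2) +
      ((n.factorial : ℝ) * (4/t)^n * Real.exp (Real.pi^2/(2*t))) * Real.exp (-(t/4) * u^2)) :=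
    ((integrable_exp_neg_mul_sq ht2).const_mul _).add
      ((integrable_exp_neg_mul_sq ht4).const_mul _)
  refine Integrable.mono' gint.integrableOn (Continuous.aestronglyMeasurable (by fun_prop)) ?_
  filter_upwards [self_mem_ae_restrict measurableSet_Ioi] with u hu
  have hu0 : (0:ℝ) < u := hu
  have e1 : Real.exp (Real.pi * u) * Real.exp (-t * u^2) ≤
      Real.exp (Real.pi^2/(2*t)) * Real.exp (-(t/2) * u^2) := by
    rw [← Real.exp_add, ← Real.exp_add]
    apply Real.exp_le_exp.2
    have hd : Real.pi^2/(2*t) * (2*t) = Real.pi^2 := div_mul_cancel₀ _ (by positivity)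
    nlinarith [sq_nonneg (t*u - Real.pi), ht]
  have e2 : u^n ≤ 1 + (n.factorial : ℝ) * (4/t)^n * Real.exp (t/4 * u^2) := by
    have hpos : (0:ℝ) ≤ (n.factorial : ℝ) * (4/t)^n * Real.exp (t/4 * u^2) := by positivity
    rcases le_total u 1 with h | h
    · have : u^n ≤ 1 := pow_le_one₀ hu0.le h
      linarith
    · have h1 : u^n ≤ (u^2)^n := by
        apply pow_le_pow_left₀ hu0.le
        nlinarith
      have h2 := pow_le_factorial_mul_exp n (s := t/4 * u^2) (by positivity)
      have h3 : (u^2)^n = (4/t)^n * (t/4 * u^2)^n := by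
        rw [← mul_pow]
        congr 1
        field_simp
      have h4 : (u^2)^n ≤ (n.factorial : ℝ) * (4/t)^n * Real.exp (t/4 * u^2) := by
        rw [h3]
        calc (4/t)^n * (t/4 * u^2)^n ≤ (4/t)^n * ((n.factorial : ℝ) * Real.exp (t/4*u^2)) :=
              mul_le_mul_of_nonneg_left h2 (by positivity)
        _ = (n.factorial : ℝ) * (4/t)^n * Real.exp (t/4 * u^2) := by ring
      linarith
  rw [Real.norm_eq_abs, abs_of_nonneg (by positivity)]
  have emerge : Real.exp (t/4 * u^2) * (Real.exp (Real.pi^2/(2*t)) * Real.exp (-(t/2)*u^2)) =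
      Real.exp (Real.pi^2/(2*t)) * Real.exp (-(t/4)*u^2) := by
    rw [← Real.exp_add, ← Real.exp_add, ← Real.exp_add]
    congr 1
    ring
  calc u^n * Real.exp (Real.pi*u) * Real.exp (-t*u^2)
      = u^n * (Real.exp (Real.pi*u) * Real.exp (-t*u^2)) := by ring
  _ ≤ (1 + (n.factorial : ℝ) * (4/t)^n * Real.exp (t/4 * u^2)) *
        (Real.exp (Real.pi^2/(2*t)) * Real.exp (-(t/2) * u^2)) := by
        apply mul_le_mul e2 e1 (by positivity) (by positivity)
  _ = Real.exp (Real.pi^2/(2*t)) * Real.exp (-(t/2)*u^2) + (n.factorial : ℝ) * (4/t)^n *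
        (Real.exp (t/4*u^2) * (Real.exp (Real.pi^2/(2*t)) * Real.exp (-(t/2)*u^2))) := by ring
  _ = _ := by rw [emerge]; ring

@[fun_prop]
lemma besselF_cont_u (x : ℝ) : Continuous fun u => besselF u x := by
  apply continuous_of_dominated (bound := fun w =>
    Real.cosh w ^ 0 * Real.exp (-(Real.exp x * Real.cosh w)))
  · exact fun u => Continuous.aestronglyMeasurable (by fun_prop)
  · intro u
    filter_upwards with w
    rw [Real.norm_eq_abs, abs_mul, Real.abs_exp, pow_zero, one_mul]
    calc Real.exp (-Real.exp x * Real.cosh w) * |Real.cos (u*w)|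
        ≤ Real.exp (-Real.exp x * Real.cosh w) * 1 :=
          mul_le_mul_of_nonneg_left (Real.abs_cos_le_one _) (Real.exp_pos _).le
    _ = Real.exp (-(Real.exp x * Real.cosh w)) := by rw [mul_one, neg_mul]
  · exact integrableOn_coshPow_exp 0 (Real.exp_pos x)
  · filter_upwards with w
    fun_prop

@[fun_prop]
lemma besselF1_cont_u (x : ℝ) : Continuous fun u => besselF1 u x := by
  apply continuous_of_dominated (bound := fun w =>
    Real.exp (x+1) * (Real.cosh w ^ 1 * Real.exp (-(Real.exp (x-1) * Real.cosh w))))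
  · exact fun u => Continuous.aestronglyMeasurable (by fun_prop)
  · intro u
    filter_upwards with w
    exact norm_F1_le u w (by simp)
  · exact bound1_int x
  · filter_upwards with w
    fun_prop

@[fun_prop]
lemma besselF2_cont_u (x : ℝ) : Continuous fun u => besselF2 u x := by
  apply continuous_of_dominated (bound := fun w =>
    Real.exp (x+1)^2 * (Real.cosh w ^ 2 * Real.exp (-(Real.exp (x-1) * Real.cosh w))) +
      Real.exp (x+1) * (Real.cosh w ^ 1 * Real.exp (-(Real.exp (x-1) * Real.cosh w))))
  · exact fun u => Continuous.aestronglyMeasurable (by fun_prop)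
  · intro u
    filter_upwards with w
    exact norm_F2_le u w (by simp)
  · exact bound2_int x
  · filter_upwards with w
    fun_prop

@[fun_prop]
lemma cker_cont : Continuous cker := by
  unfold cker
  fun_prop

lemma abs_mul4_le {a b c d A B C D : ℝ} (ha : |a| ≤ A) (hb : |b| ≤ B) (hc : |c| ≤ C)
    (hd : |d| ≤ D) : |a*b*c*d| ≤ A*B*C*D := by
  have hA := (abs_nonneg a).trans ha
  have hB := (abs_nonneg b).trans hb
  have hC := (abs_nonneg c).trans hc
  rw [abs_mul, abs_mul, abs_mul]
  exact mul_le_mul (mul_le_mul (mul_le_mul ha hb (abs_nonneg b) hA) hc (abs_nonneg c)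
    (mul_nonneg hA hB)) hd (abs_nonneg d) (mul_nonneg (mul_nonneg hA hB) hC)

noncomputable def G0 (t x y u : ℝ) : ℝ :=
  Real.exp (-t*u^2) * besselF u x * besselF u y * cker u
noncomputable def G1 (t x y u : ℝ) : ℝ :=
  Real.exp (-t*u^2) * besselF1 u x * besselF u y * cker u
noncomputable def G2 (t x y u : ℝ) : ℝ :=
  Real.exp (-t*u^2) * besselF2 u x * besselF u y * cker u
noncomputable def Gt (t x y u : ℝ) : ℝ :=
  (-u^2 * Real.exp (-t*u^2)) * besselF u x * besselF u y * cker u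

lemma integrableOn_of_bound {t : ℝ} (ht : 0 < t) (n : ℕ) (C : ℝ) {f : ℝ → ℝ}
    (hm : AEStronglyMeasurable f (volume.restrict (Set.Ioi 0)))
    (hb : ∀ u, 0 < u → |f u| ≤ C * (u^n * Real.exp (Real.pi*u) * Real.exp (-t*u^2))) :
    IntegrableOn f (Set.Ioi 0) := by
  refine Integrable.mono' ((integrableOn_M ht n).const_mul C) hm ?_
  filter_upwards [self_mem_ae_restrict measurableSet_Ioi] with u hu
  exact hb u hu

lemma G0_abs_le {t x y u : ℝ} (hu : 0 < u) :
    |G0 t x y u| ≤ (bK (Real.exp x) 0 * bK (Real.exp y) 0 * (2/Real.pi^2)) *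
      (u^1 * Real.exp (Real.pi*u) * Real.exp (-t*u^2)) := by
  have h := abs_mul4_le (le_refl |Real.exp (-t*u^2)|) (besselF_abs_le u x) (besselF_abs_le u y)
    (cker_abs_le hu.le)
  rw [Real.abs_exp] at h
  refine h.trans (le_of_eq ?_)
  ring

lemma hG0int {t : ℝ} (ht : 0 < t) (x y : ℝ) : IntegrableOn (G0 t x y) (Set.Ioi 0) := by
  refine integrableOn_of_bound ht 1 _ (Continuous.aestronglyMeasurable ?_) fun u hu => G0_abs_le hu
  unfold G0
  fun_prop

lemma hGtint {t s : ℝ} (ht : 0 < t) (hs : t/2 ≤ s) (x y u : ℝ) (hu : 0 < u) :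
    |Gt s x y u| ≤ (bK (Real.exp x) 0 * bK (Real.exp y) 0 * (2/Real.pi^2)) *
      (u^3 * Real.exp (Real.pi*u) * Real.exp (-(t/2)*u^2)) := by
  have h1 : |(-u^2 * Real.exp (-s*u^2))| ≤ u^2 * Real.exp (-(t/2)*u^2) := by
    rw [abs_mul, abs_neg, abs_pow, sq_abs, Real.abs_exp]
    apply mul_le_mul_of_nonneg_left _ (sq_nonneg u)
    apply Real.exp_le_exp.2
    nlinarith [sq_nonneg u]
  have h := abs_mul4_le h1 (besselF_abs_le u x) (besselF_abs_le u y) (cker_abs_le hu.le)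
  refine h.trans (le_of_eq ?_)
  ring

lemma G1_abs_le {t x y u : ℝ} (hu : 0 < u) {x' : ℝ} (hx' : |x' - x| ≤ 1) :
    |G1 t x' y u| ≤ ((Real.exp (x+1) * bK (Real.exp (x-1)) 1) * bK (Real.exp y) 0 *
      (2/Real.pi^2)) * (u^1 * Real.exp (Real.pi*u) * Real.exp (-t*u^2)) := by
  unfold G1
  have h := abs_mul4_le (le_refl |Real.exp (-t*u^2)|) (besselF1_abs_le (u := u) hx')
    (besselF_abs_le u y) (cker_abs_le hu.le)
  rw [Real.abs_exp] at h
  refine h.trans (le_of_eq ?_)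
  ring

lemma G2_abs_le {t x y u : ℝ} (hu : 0 < u) {x' : ℝ} (hx' : |x' - x| ≤ 1) :
    |G2 t x' y u| ≤ ((Real.exp (x+1)^2 * bK (Real.exp (x-1)) 2 +
      Real.exp (x+1) * bK (Real.exp (x-1)) 1) * bK (Real.exp y) 0 *
      (2/Real.pi^2)) * (u^1 * Real.exp (Real.pi*u) * Real.exp (-t*u^2)) := by
  unfold G2
  have h := abs_mul4_le (le_refl |Real.exp (-t*u^2)|) (besselF2_abs_le (u := u) hx')
    (besselF_abs_le u y) (cker_abs_le hu.le)
  rw [Real.abs_exp] at h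
  refine h.trans (le_of_eq ?_)
  ring

lemma hG1int {t : ℝ} (ht : 0 < t) (x y : ℝ) : IntegrableOn (G1 t x y) (Set.Ioi 0) := by
  have hm : AEStronglyMeasurable (G1 t x y) (volume.restrict (Set.Ioi 0)) :=
    Continuous.aestronglyMeasurable (by unfold G1; fun_prop)
  exact integrableOn_of_bound ht 1 _ hm
    (fun u hu => G1_abs_le (x := x) (x' := x) hu (by simp))

lemma hG2int {t : ℝ} (ht : 0 < t) (x y : ℝ) : IntegrableOn (G2 t x y) (Set.Ioi 0) := by
  have hm : AEStronglyMeasurable (G2 t x y) (volume.restrict (Set.Ioi 0)) :=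
    Continuous.aestronglyMeasurable (by unfold G2; fun_prop)
  exact integrableOn_of_bound ht 1 _ hm
    (fun u hu => G2_abs_le (x := x) (x' := x) hu (by simp))

lemma G0_hasDerivAt_s (x y u s : ℝ) : HasDerivAt (fun s => G0 s x y u) (Gt s x y u) s := by
  unfold G0 Gt
  have hid : HasDerivAt (fun s : ℝ => -s * u^2) (-1 * u^2) s := (hasDerivAt_id s).neg.mul_const _
  have hexp := (Real.hasDerivAt_exp (-s*u^2)).comp s hid
  have h := ((hexp.mul_const (besselF u x)).mul_const (besselF u y)).mul_const (cker u)
  exact h.congr_deriv (by ring)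

lemma G0_hasDerivAt_x (t y u x' : ℝ) : HasDerivAt (fun z => G0 t z y u) (G1 t x' y u) x' := by
  unfold G0 G1
  exact (((besselF_hasDerivAt u x').const_mul (Real.exp (-t*u^2))).mul_const
    (besselF u y)).mul_const (cker u)

lemma G1_hasDerivAt_x (t y u x' : ℝ) : HasDerivAt (fun z => G1 t z y u) (G2 t x' y u) x' := by
  unfold G1 G2
  exact (((besselF1_hasDerivAt u x').const_mul (Real.exp (-t*u^2))).mul_const
    (besselF u y)).mul_const (cker u)

lemma heatG_hasDerivAt_t {t : ℝ} (ht : 0 < t) (x y : ℝ) :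
    HasDerivAt (fun s => ∫ u in Set.Ioi (0:ℝ), G0 s x y u)
      (∫ u in Set.Ioi (0:ℝ), Gt t x y u) t := by
  have ht2 : (0:ℝ) < t/2 := by linarith
  have hmeas : ∀ s : ℝ, AEStronglyMeasurable (G0 s x y) (volume.restrict (Set.Ioi 0)) :=
    fun s => Continuous.aestronglyMeasurable (by unfold G0; fun_prop)
  have hmeas' : AEStronglyMeasurable (Gt t x y) (volume.restrict (Set.Ioi 0)) :=
    Continuous.aestronglyMeasurable (by unfold Gt; fun_prop)
  have := hasDerivAt_integral_of_dominated_loc_of_deriv_le (μ := volume.restrict (Set.Ioi 0))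
    (F := fun s u => G0 s x y u) (F' := fun s u => Gt s x y u) (x₀ := t)
    (bound := fun u => (bK (Real.exp x) 0 * bK (Real.exp y) 0 * (2/Real.pi^2)) *
      (u^3 * Real.exp (Real.pi*u) * Real.exp (-(t/2)*u^2)))
    (Metric.ball_mem_nhds t ht2)
    (Filter.Eventually.of_forall fun s => hmeas s)
    (hG0int ht x y) hmeas'
    (by filter_upwards [self_mem_ae_restrict measurableSet_Ioi] with u hu
        intro s hs
        rw [Metric.mem_ball, Real.dist_eq, abs_lt] at hs
        rw [Real.norm_eq_abs]
        exact hGtint ht (by linarith [hs.1]) x y u hu)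
    ((integrableOn_M ht2 3).const_mul _)
    (Filter.Eventually.of_forall fun u s _ => G0_hasDerivAt_s x y u s)
  exact this.2

lemma heatG_hasDerivAt_x {t : ℝ} (ht : 0 < t) (x y : ℝ) :
    HasDerivAt (fun x' => ∫ u in Set.Ioi (0:ℝ), G0 t x' y u)
      (∫ u in Set.Ioi (0:ℝ), G1 t x y u) x := by
  have hmeas : ∀ x' : ℝ, AEStronglyMeasurable (fun u => G0 t x' y u)
      (volume.restrict (Set.Ioi 0)) :=
    fun x' => Continuous.aestronglyMeasurable (by unfold G0; fun_prop)
  have hmeas' : AEStronglyMeasurable (G1 t x y) (volume.restrict (Set.Ioi 0)) :=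
    Continuous.aestronglyMeasurable (by unfold G1; fun_prop)
  have := hasDerivAt_integral_of_dominated_loc_of_deriv_le (μ := volume.restrict (Set.Ioi 0))
    (F := fun x' u => G0 t x' y u) (F' := fun x' u => G1 t x' y u) (x₀ := x)
    (bound := fun u => ((Real.exp (x+1) * bK (Real.exp (x-1)) 1) * bK (Real.exp y) 0 *
      (2/Real.pi^2)) * (u^1 * Real.exp (Real.pi*u) * Real.exp (-t*u^2)))
    (Metric.ball_mem_nhds x one_pos)
    (Filter.Eventually.of_forall fun x' => hmeas x')
    (hG0int ht x y) hmeas'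
    (by filter_upwards [self_mem_ae_restrict measurableSet_Ioi] with u hu
        intro x' hx'
        rw [Metric.mem_ball, Real.dist_eq] at hx'
        rw [Real.norm_eq_abs]
        exact G1_abs_le hu hx'.le)
    ((integrableOn_M ht 1).const_mul _)
    (Filter.Eventually.of_forall fun u x' _ => G0_hasDerivAt_x t y u x')
  exact this.2

lemma heatG1_hasDerivAt_x {t : ℝ} (ht : 0 < t) (x y : ℝ) :
    HasDerivAt (fun x' => ∫ u in Set.Ioi (0:ℝ), G1 t x' y u)
      (∫ u in Set.Ioi (0:ℝ), G2 t x y u) x := by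
  have hmeas : ∀ x' : ℝ, AEStronglyMeasurable (fun u => G1 t x' y u)
      (volume.restrict (Set.Ioi 0)) :=
    fun x' => Continuous.aestronglyMeasurable (by unfold G1; fun_prop)
  have hmeas' : AEStronglyMeasurable (G2 t x y) (volume.restrict (Set.Ioi 0)) :=
    Continuous.aestronglyMeasurable (by unfold G2; fun_prop)
  have := hasDerivAt_integral_of_dominated_loc_of_deriv_le (μ := volume.restrict (Set.Ioi 0))
    (F := fun x' u => G1 t x' y u) (F' := fun x' u => G2 t x' y u) (x₀ := x)
    (bound := fun u => ((Real.exp (x+1)^2 * bK (Real.exp (x-1)) 2 +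
      Real.exp (x+1) * bK (Real.exp (x-1)) 1) * bK (Real.exp y) 0 *
      (2/Real.pi^2)) * (u^1 * Real.exp (Real.pi*u) * Real.exp (-t*u^2)))
    (Metric.ball_mem_nhds x one_pos)
    (Filter.Eventually.of_forall fun x' => hmeas x')
    (hG1int ht x y) hmeas'
    (by filter_upwards [self_mem_ae_restrict measurableSet_Ioi] with u hu
        intro x' hx'
        rw [Metric.mem_ball, Real.dist_eq] at hx'
        rw [Real.norm_eq_abs]
        exact G2_abs_le hu hx'.le)
    ((integrableOn_M ht 1).const_mul _)
    (Filter.Eventually.of_forall fun u x' _ => G1_hasDerivAt_x t y u x')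
  exact this.2

lemma integrand_eq (t x y : ℝ) {u : ℝ} (hu : u ∈ Set.Ioi (0:ℝ)) :
    heatKerIntegrand t x y u = G0 t x y u := by
  have hu0 : (0:ℝ) < u := hu
  have hS : Real.sinh (Real.pi * u) ≠ 0 := ne_of_gt (Real.sinh_pos_iff.2 (by positivity))
  have hπ := Real.pi_pos
  unfold heatKerIntegrand G0
  rw [gamma_abs_sq hu0]
  unfold cker
  congr 1
  rw [div_eq_div_iff (by positivity) (by positivity)]
  field_simp

lemma heatKer_eq (t x y : ℝ) : heatKer t x y = ∫ u in Set.Ioi (0:ℝ), G0 t x y u := by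
  unfold heatKer
  exact setIntegral_congr_fun measurableSet_Ioi fun u hu => integrand_eq t x y hu

/-- The integral defining `p(t;x,y)` converges, `p` is differentiable in `t` and
twice differentiable in `x`, and it satisfies the heat equation
`∂_t p = ∂_{xx} p - e^{2x} p` for `t > 0`. -/
theorem heatKer_pde :
    (∀ t > (0 : ℝ), ∀ x y : ℝ,
        IntegrableOn (heatKerIntegrand t x y) (Set.Ioi (0 : ℝ))) ∧
    (∀ t > (0 : ℝ), ∀ x y : ℝ, DifferentiableAt ℝ (fun s => heatKer s x y) t) ∧
    (∀ t > (0 : ℝ), ∀ x y : ℝ,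
        Differentiable ℝ (fun x' => heatKer t x' y) ∧
        Differentiable ℝ (deriv (fun x' => heatKer t x' y))) ∧
    (∀ t > (0 : ℝ), ∀ x y : ℝ,
        deriv (fun s => heatKer s x y) t =
          deriv (deriv (fun x' => heatKer t x' y)) x - Real.exp (2 * x) * heatKer t x y) := by
  refine ⟨?_, ?_, ?_, ?_⟩
  · intro t ht x y
    exact IntegrableOn.congr_fun (hG0int ht x y)
      (fun u hu => (integrand_eq t x y hu).symm) measurableSet_Ioi
  · intro t ht x y
    have he : (fun s => heatKer s x y) = fun s => ∫ u in Set.Ioi (0:ℝ), G0 s x y u :=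
      funext fun s => heatKer_eq s x y
    rw [he]
    exact (heatG_hasDerivAt_t ht x y).differentiableAt
  · intro t ht x y
    have he : (fun x' => heatKer t x' y) = fun x' => ∫ u in Set.Ioi (0:ℝ), G0 t x' y u :=
      funext fun x' => heatKer_eq t x' y
    have hd1 : deriv (fun x' => heatKer t x' y) =
        fun x' => ∫ u in Set.Ioi (0:ℝ), G1 t x' y u := by
      funext x'
      rw [he]
      exact (heatG_hasDerivAt_x ht x' y).deriv
    constructor
    · rw [he]
      exact fun x' => (heatG_hasDerivAt_x ht x' y).differentiableAt
    · rw [hd1]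
      exact fun x' => (heatG1_hasDerivAt_x ht x' y).differentiableAt
  · intro t ht x y
    have he : (fun s => heatKer s x y) = fun s => ∫ u in Set.Ioi (0:ℝ), G0 s x y u :=
      funext fun s => heatKer_eq s x y
    have he2 : (fun x' => heatKer t x' y) = fun x' => ∫ u in Set.Ioi (0:ℝ), G0 t x' y u :=
      funext fun x' => heatKer_eq t x' y
    have hd1 : deriv (fun x' => heatKer t x' y) =
        fun x' => ∫ u in Set.Ioi (0:ℝ), G1 t x' y u := by
      funext x'
      rw [he2]
      exact (heatG_hasDerivAt_x ht x' y).deriv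
    have hL : deriv (fun s => heatKer s x y) t = ∫ u in Set.Ioi (0:ℝ), Gt t x y u := by
      rw [he]
      exact (heatG_hasDerivAt_t ht x y).deriv
    have hR : deriv (deriv (fun x' => heatKer t x' y)) x = ∫ u in Set.Ioi (0:ℝ), G2 t x y u := by
      rw [hd1]
      exact (heatG1_hasDerivAt_x ht x y).deriv
    rw [hL, hR, heatKer_eq t x y]
    have hpt : Gt t x y = fun u => G2 t x y u - Real.exp (2*x) * G0 t x y u := by
      funext u
      unfold Gt G2 G0
      rw [besselF2_eq u x, show Real.exp (2*x) = Real.exp x^2 by rw [two_mul, Real.exp_add, sq]]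
      ring
    calc ∫ u in Set.Ioi (0:ℝ), Gt t x y u
        = ∫ u in Set.Ioi (0:ℝ), (G2 t x y u - Real.exp (2*x) * G0 t x y u) := by rw [hpt]
    _ = (∫ u in Set.Ioi (0:ℝ), G2 t x y u) -
          Real.exp (2*x) * ∫ u in Set.Ioi (0:ℝ), G0 t x y u := by
        rw [integral_sub (hG2int ht x y) ((hG0int ht x y).const_mul _), integral_const_mul]
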